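/- Let m be odd, σ^lr(t) = 1/(1+e^{-t}) the logistic link, and ρ_m(t) = P(Binomial(m, σ^lr(|t|)) ≥ m/2). For a real random variable Z with continuous distribution, E[Z]=0, E[|Z|] < ∞, P(Z≠0)=1, and t* > 0, define h_m(t) = E[|Z|(1 - ρ_m(t*|Z|))] - E[|Z|/(1 + e^{t|Z|})]. Then h_m(t*) ≤ 0, h_m is strictly increasing in t, lim_{t→∞} h_m(t) = E[|Z|(1-ρ_m(t*|Z|))] > 0, and hence h_m has a unique zero t_m with t_m ≥ t*. -/

import Mathlib

open MeasureTheory Filter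

/-- `Tmaj m t` is the probability that a `Binomial(m, t)` random variable is at least
`⌈m/2⌉`: for odd `m`, `⌈m/2⌉ = (m+1)/2` in natural-number division. -/
noncomputable def Tmaj (m : ℕ) (t : ℝ) : ℝ :=
  ∑ i ∈ Finset.Icc ((m + 1) / 2) m, (m.choose i : ℝ) * t ^ i * (1 - t) ^ (m - i)

/-- The logistic link `σ^lr(t) = 1/(1+e^{-t})`. -/
noncomputable def logisticLink (t : ℝ) : ℝ := 1 / (1 + Real.exp (-t))

/-- `ρ_m(t)`: the probability that majority vote over `m` i.i.d. logistic labels with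
margin `|t|` is correct. -/
noncomputable def rhoMaj (m : ℕ) (t : ℝ) : ℝ := Tmaj m (logisticLink |t|)

lemma sum_binom (m : ℕ) (p : ℝ) :
    ∑ i ∈ Finset.range (m+1), (m.choose i : ℝ) * p ^ i * (1 - p) ^ (m - i) = 1 := by
  have h := add_pow p (1-p) m
  simp only [add_sub_cancel] at h
  rw [one_pow] at h
  exact (Finset.sum_congr rfl (fun i _ => by ring)).trans h.symm

lemma Tmaj_split (m : ℕ) (p : ℝ) :
    Tmaj m p = 1 - ∑ i ∈ Finset.range ((m+1)/2), (m.choose i : ℝ) * p ^ i * (1 - p) ^ (m - i) := by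
  have hle : (m+1)/2 ≤ m + 1 := by omega
  have hc := Finset.sum_Ico_consecutive (f := fun i => (m.choose i : ℝ) * p ^ i * (1 - p) ^ (m - i))
    (Nat.zero_le ((m+1)/2)) hle
  have h2 : Finset.Icc ((m+1)/2) m = Finset.Ico ((m+1)/2) (m+1) := by
    rw [Finset.Ico_add_one_right_eq_Icc]
  have h3 := sum_binom m p
  rw [Finset.range_eq_Ico] at h3 ⊢
  rw [Tmaj, h2, eq_sub_iff_add_eq, add_comm, hc, h3]

lemma term_nonneg (m i : ℕ) {p : ℝ} (h0 : 0 ≤ p) (h1 : p ≤ 1) :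
    0 ≤ (m.choose i : ℝ) * p ^ i * (1 - p) ^ (m - i) :=
  mul_nonneg (mul_nonneg (Nat.cast_nonneg _) (pow_nonneg h0 _))
    (pow_nonneg (by linarith) _)

lemma Tmaj_nonneg (m : ℕ) {p : ℝ} (h0 : 0 ≤ p) (h1 : p ≤ 1) : 0 ≤ Tmaj m p :=
  Finset.sum_nonneg fun i _ => term_nonneg m i h0 h1

lemma Tmaj_le (m : ℕ) (hm : 1 ≤ m) {p : ℝ} (h0 : 0 ≤ p) (h1 : p ≤ 1) :
    Tmaj m p ≤ 1 - (1 - p) ^ m := by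
  rw [Tmaj_split]
  have h2 : (1 - p) ^ m ≤ ∑ i ∈ Finset.range ((m+1)/2),
      (m.choose i : ℝ) * p ^ i * (1 - p) ^ (m - i) := by
    have hmem : 0 ∈ Finset.range ((m+1)/2) := by
      simp; omega
    have := Finset.single_le_sum (f := fun i => (m.choose i : ℝ) * p ^ i * (1 - p) ^ (m - i))
      (fun i _ => term_nonneg m i h0 h1) hmem
    simpa using this
  linarith

lemma Tmaj_one (m : ℕ) : Tmaj m 1 = 1 := by
  rw [Tmaj]
  rw [Finset.sum_eq_single m]
  · simp
  · intro i hi hne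
    have : 0 < m - i := by
      simp only [Finset.mem_Icc] at hi; omega
    simp [zero_pow (by omega : m - i ≠ 0)]
  · intro hm
    exfalso
    exact hm (by simp [Finset.mem_Icc]; omega)

lemma Tmaj_half (k : ℕ) : Tmaj (2*k+1) (1/2 : ℝ) = 1/2 := by
  have hj : (2*k+1+1)/2 = k+1 := by omega
  rw [Tmaj, hj]
  have h1 : ∀ i ∈ Finset.Icc (k+1) (2*k+1),
      ((2*k+1).choose i : ℝ) * (1/2:ℝ) ^ i * (1 - 1/2) ^ (2*k+1 - i)
        = ((2*k+1).choose i : ℝ) * (1/2:ℝ) ^ (2*k+1) := by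
    intro i hi
    simp only [Finset.mem_Icc] at hi
    rw [show (1 - 1/2 : ℝ) = 1/2 by norm_num, mul_assoc, ← pow_add,
      show i + (2*k+1-i) = 2*k+1 by omega]
  rw [Finset.sum_congr rfl h1, ← Finset.sum_mul, ← Nat.cast_sum]
  have h2 : ∑ i ∈ Finset.Icc (k+1) (2*k+1), (2*k+1).choose i = 4^k := by
    have hB := Nat.sum_range_choose_halfway k
    have hIcc : Finset.Icc (k+1) (2*k+1) = Finset.Ico (k+1) (2*k+1+1) := by
      rw [← Finset.Ico_add_one_right_eq_Icc]
    rw [hIcc]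
    have htot : ∑ i ∈ Finset.range (k+1), (2*k+1).choose i
        + ∑ i ∈ Finset.Ico (k+1) (2*k+1+1), (2*k+1).choose i = 2^(2*k+1) := by
      rw [Finset.range_eq_Ico,
        Finset.sum_Ico_consecutive _ (Nat.zero_le _) (by omega : k+1 ≤ 2*k+1+1),
        ← Finset.range_eq_Ico]
      exact Nat.sum_range_choose (2*k+1)
    have hp : (2:ℕ)^(2*k+1) = 2 * 4^k := by
      rw [pow_succ, pow_mul]; ring
    omega
  rw [h2]
  have h3 : ((4^k:ℕ):ℝ) = (2:ℝ)^(2*k) := by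
    push_cast
    rw [show (4:ℝ) = 2^2 by norm_num, ← pow_mul]
  rw [h3, one_div, inv_pow, pow_succ]
  have : (2:ℝ)^(2*k) ≠ 0 := by positivity
  field_simp

lemma choose_id1 (m i : ℕ) (h1 : 1 ≤ i) (h2 : 1 ≤ m) :
    (i:ℝ) * (m.choose i : ℝ) = (m:ℝ) * ((m-1).choose (i-1) : ℝ) := by
  have key := Nat.add_one_mul_choose_eq (m-1) (i-1)
  rw [(by omega : m - 1 + 1 = m), (by omega : i - 1 + 1 = i)] at key
  calc (i:ℝ) * (m.choose i : ℝ) = ((m.choose i * i : ℕ) : ℝ) := by push_cast; ring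
    _ = ((m * (m-1).choose (i-1) : ℕ) : ℝ) := by rw [← key]
    _ = (m:ℝ) * ((m-1).choose (i-1) : ℝ) := by push_cast; ring

lemma choose_id2 (m i : ℕ) (h1 : 1 ≤ i) (him : i ≤ m) :
    ((m - i : ℕ):ℝ) * (m.choose i : ℝ) = (m:ℝ) * ((m-1).choose i : ℝ) := by
  rcases eq_or_lt_of_le him with rfl | hlt
  · simp [Nat.choose_eq_zero_of_lt (by omega : i - 1 < i)]
  · have key := Nat.add_one_mul_choose_eq (m-1) (m-i-1)
    rw [(by omega : m - 1 + 1 = m), (by omega : m - i - 1 + 1 = m - i)] at key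
    have s1 : m.choose (m-i) = m.choose i := Nat.choose_symm him
    have s2 : (m-1).choose (m-i-1) = (m-1).choose i := by
      rw [(by omega : m - i - 1 = (m-1) - i)]
      exact Nat.choose_symm (by omega)
    rw [s1, s2] at key
    calc ((m - i : ℕ):ℝ) * (m.choose i : ℝ) = ((m.choose i * (m - i) : ℕ) : ℝ) := by
          push_cast; ring
      _ = ((m * (m-1).choose i : ℕ) : ℝ) := by rw [← key]
      _ = (m:ℝ) * ((m-1).choose i : ℝ) := by push_cast; ring

lemma Tmaj_hasDerivAt (k : ℕ) (p : ℝ) :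
    HasDerivAt (Tmaj (2*k+1))
      (((2*k+1 : ℕ):ℝ) * (((2*k).choose k : ℕ):ℝ) * (p*(1-p))^k) p := by
  set m := 2*k+1 with hmdef
  have hj : (m+1)/2 = k+1 := by omega
  set D : ℕ → ℝ := fun i => (m.choose i : ℝ) * ((i:ℝ) * p ^ (i-1)) * (1-p)^(m-i)
      + (m.choose i : ℝ) * p ^ i * (-(((m-i:ℕ):ℝ) * (1-p)^(m-i-1))) with hD
  have hterm : ∀ i ∈ Finset.Icc (k+1) m,
      HasDerivAt (fun x : ℝ => (m.choose i : ℝ) * x ^ i * (1 - x) ^ (m - i)) (D i) p := by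
    intro i hi
    have h1 : HasDerivAt (fun x : ℝ => (m.choose i : ℝ) * x ^ i)
        ((m.choose i : ℝ) * ((i:ℝ) * p ^ (i-1))) p := (hasDerivAt_pow i p).const_mul _
    have h0 : HasDerivAt (fun x : ℝ => 1 - x) (-1) p := by
      simpa using (hasDerivAt_id p).const_sub 1
    have h2 : HasDerivAt (fun x : ℝ => (1 - x) ^ (m - i))
        (-(((m-i:ℕ):ℝ) * (1-p)^(m-i-1))) p := by
      have := h0.pow (m-i)
      exact this.congr_deriv (by ring)
    exact h1.mul h2
  have hsum := HasDerivAt.fun_sum hterm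
  have hfun : Tmaj m = fun x => ∑ i ∈ Finset.Icc (k+1) m,
      (m.choose i : ℝ) * x ^ i * (1 - x) ^ (m-i) := by
    funext x; rw [Tmaj, hj]
  rw [hfun]
  set G : ℕ → ℝ := fun i => (m:ℝ) * (((m-1).choose (i-1) : ℕ):ℝ) * p^(i-1) * (1-p)^(m-i)
    with hG
  have hDG : ∀ i ∈ Finset.Icc (k+1) m, D i = G i - G (i+1) := by
    intro i hi
    simp only [Finset.mem_Icc] at hi
    have hi1 : 1 ≤ i := by omega
    have him : i ≤ m := hi.2
    have e1 := choose_id1 m i hi1 (by omega)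
    have e2 := choose_id2 m i hi1 him
    rw [hD, hG]
    simp only
    rw [(by omega : m - (i+1) = m - i - 1), (by omega : i + 1 - 1 = i)]
    calc (m.choose i : ℝ) * ((i:ℝ) * p ^ (i-1)) * (1-p)^(m-i)
          + (m.choose i : ℝ) * p ^ i * (-(((m-i:ℕ):ℝ) * (1-p)^(m-i-1)))
        = ((i:ℝ) * (m.choose i : ℝ)) * p ^ (i-1) * (1-p)^(m-i)
          - (((m-i:ℕ):ℝ) * (m.choose i : ℝ)) * p ^ i * (1-p)^(m-i-1) := by ring
      _ = (m:ℝ) * (((m-1).choose (i-1) : ℕ):ℝ) * p^(i-1) * (1-p)^(m-i)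
          - (m:ℝ) * (((m-1).choose i : ℕ):ℝ) * p^i * (1-p)^(m-i-1) := by rw [e1, e2]
  have key : ∑ i ∈ Finset.Icc (k+1) m, D i
      = ((m:ℕ):ℝ) * (((2*k).choose k : ℕ):ℝ) * (p*(1-p))^k := by
    rw [Finset.sum_congr rfl hDG]
    rw [(by rw [Finset.Ico_add_one_right_eq_Icc] : Finset.Icc (k+1) m = Finset.Ico (k+1) (m+1))]
    rw [Finset.sum_Ico_eq_sum_range]
    rw [(by omega : m + 1 - (k+1) = k+1)]
    have htel := Finset.sum_range_sub' (f := fun i => G (k+1+i)) (n := k+1)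
    simp only [← add_assoc] at htel
    rw [htel]
    have hG1 : G (k+1+0) = (m:ℝ) * (((2*k).choose k : ℕ):ℝ) * p^k * (1-p)^k := by
      rw [hG]; simp only
      rw [(by omega : k+1+0-1 = k), (by omega : m - (k+1+0) = k), (by omega : m - 1 = 2*k)]
    have hG2 : G (k+1+k+1) = 0 := by
      rw [hG]; simp only
      rw [(by omega : k+1+k+1-1 = 2*k+1), (by omega : m - 1 = 2*k)]
      rw [Nat.choose_eq_zero_of_lt (by omega)]
      simp
    rw [hG1, hG2, mul_pow]
    ring
  rw [← key]
  exact hsum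

lemma Tmaj_ge (k : ℕ) {p : ℝ} (hp : 1/2 ≤ p) (hp1 : p ≤ 1) : p ≤ Tmaj (2*k+1) p := by
  set m := 2*k+1 with hmdef
  set c : ℝ := ((m:ℕ):ℝ) * (((2*k).choose k : ℕ):ℝ) with hc
  have hc0 : 0 ≤ c := by positivity
  set g : ℝ → ℝ := fun x => Tmaj m x - x with hg
  have hder : ∀ x : ℝ, HasDerivAt g (c * (x*(1-x))^k - 1) x := by
    intro x
    exact (Tmaj_hasDerivAt k x).sub (hasDerivAt_id x)
  have hderiv : ∀ x : ℝ, deriv g x = c * (x*(1-x))^k - 1 := fun x => (hder x).deriv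
  have hconc : ConcaveOn ℝ (Set.Icc (1/2 : ℝ) 1) g := by
    apply AntitoneOn.concaveOn_of_deriv (convex_Icc _ _)
    · exact fun x _ => ((hder x).continuousAt).continuousWithinAt
    · intro x _
      exact ((hder x).differentiableAt).differentiableWithinAt
    · rw [interior_Icc]
      intro x hx y hy hxy
      rw [hderiv, hderiv]
      have hxx : 0 ≤ x * (1-x) := mul_nonneg (by linarith [hx.1]) (by linarith [hx.2])
      have hyy : 0 ≤ y * (1-y) := mul_nonneg (by linarith [hy.1]) (by linarith [hy.2])
      have hmono : y * (1-y) ≤ x * (1-x) := by nlinarith [hx.1, hy.2, hxy]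
      have := pow_le_pow_left₀ hyy hmono k
      nlinarith
  have h12 : (1/2 : ℝ) ∈ Set.Icc (1/2 : ℝ) 1 := by constructor <;> norm_num
  have h1 : (1 : ℝ) ∈ Set.Icc (1/2 : ℝ) 1 := by constructor <;> norm_num
  have ha : (0:ℝ) ≤ 2*(1-p) := by linarith
  have hb : (0:ℝ) ≤ 2*p-1 := by linarith
  have hab : 2*(1-p) + (2*p-1) = 1 := by ring
  have := hconc.2 h12 h1 ha hb hab
  have hcomb : (2*(1-p)) • (1/2:ℝ) + (2*p-1) • (1:ℝ) = p := by
    simp [smul_eq_mul]; ring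
  rw [hcomb] at this
  have hgh : g (1/2 : ℝ) = 0 := by
    rw [hg]; simp only
    rw [Tmaj_half k]; ring
  have hg1 : g (1:ℝ) = 0 := by
    rw [hg]; simp only
    rw [Tmaj_one]; ring
  rw [hgh, hg1] at this
  simp only [smul_eq_mul, mul_zero, add_zero] at this
  have : (0:ℝ) ≤ g p := by linarith
  rw [hg] at this; simp only at this
  linarith

lemma logistic_pos (t : ℝ) : 0 < logisticLink t := by
  rw [logisticLink]
  positivity

lemma logistic_lt_one (t : ℝ) : logisticLink t < 1 := by
  rw [logisticLink, div_lt_one (by positivity)]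
  linarith [Real.exp_pos (-t)]

lemma logistic_half_le {t : ℝ} (ht : 0 ≤ t) : 1/2 ≤ logisticLink t := by
  rw [logisticLink]
  rw [le_div_iff₀ (by positivity)]
  have : Real.exp (-t) ≤ 1 := Real.exp_le_one_iff.mpr (by linarith)
  linarith

lemma rho_le_one (m : ℕ) (hm : Odd m) (t : ℝ) : rhoMaj m t ≤ 1 := by
  have h1 : 1 ≤ m := hm.pos
  have := Tmaj_le m h1 (logistic_pos |t|).le (logistic_lt_one |t|).le
  have h2 : (0:ℝ) ≤ (1 - logisticLink |t|) ^ m :=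
    pow_nonneg (by linarith [logistic_lt_one |t|]) m
  rw [rhoMaj]; linarith

lemma rho_lt_one (m : ℕ) (hm : Odd m) (t : ℝ) : rhoMaj m t < 1 := by
  have h1 : 1 ≤ m := hm.pos
  have := Tmaj_le m h1 (logistic_pos |t|).le (logistic_lt_one |t|).le
  have h2 : (0:ℝ) < (1 - logisticLink |t|) ^ m :=
    pow_pos (by linarith [logistic_lt_one |t|]) m
  rw [rhoMaj]; linarith

lemma rho_nonneg (m : ℕ) (t : ℝ) : 0 ≤ rhoMaj m t :=
  Tmaj_nonneg m (logistic_pos |t|).le (logistic_lt_one |t|).le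

/-- The key inequality: majority vote at least as accurate as a single labeler. -/
lemma rho_key (m : ℕ) (hm : Odd m) {s : ℝ} (hs : 0 ≤ s) :
    1 - rhoMaj m s ≤ 1 / (1 + Real.exp s) := by
  obtain ⟨k, hk⟩ := hm
  have hm2 : m = 2*k+1 := by omega
  have habs : |s| = s := abs_of_nonneg hs
  have hT : logisticLink s ≤ Tmaj m (logisticLink s) := by
    rw [hm2]
    exact Tmaj_ge k (logistic_half_le hs) (logistic_lt_one s).le
  have heq : 1 - logisticLink s = 1 / (1 + Real.exp s) := by
    rw [logisticLink, Real.exp_neg]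
    have h1 : (0:ℝ) < Real.exp s := Real.exp_pos s
    field_simp
    ring
  rw [rhoMaj, habs, ← heq]
  linarith

lemma Tmaj_continuous (m : ℕ) : Continuous (Tmaj m) := by
  apply continuous_finset_sum
  intro i _
  continuity

lemma logistic_continuous : Continuous logisticLink := by
  unfold logisticLink
  apply Continuous.div continuous_const (by continuity)
  intro x
  positivity

lemma rho_continuous (m : ℕ) : Continuous (rhoMaj m) := by
  unfold rhoMaj
  exact (Tmaj_continuous m).comp (logistic_continuous.comp continuous_abs)

/-- The majority-vote calibration gap
`h_m(t) = E[|Z|(1 - ρ_m(t*|Z|))] - E[|Z|/(1 + e^{t|Z|})]` satisfies `h_m(t*) ≤ 0`, is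
strictly increasing, tends to `E[|Z|(1 - ρ_m(t*|Z|))] > 0` at infinity, and has a unique
zero `t_m`, which satisfies `t_m ≥ t*`. -/
theorem majority_vote_gap {Ω : Type*} [MeasurableSpace Ω]
    (μ : Measure Ω) [IsProbabilityMeasure μ]
    (m : ℕ) (hm : Odd m)
    (Z : Ω → ℝ) (hZm : Measurable Z) (hZ1 : Integrable Z μ)
    (hcont : ∀ z : ℝ, μ {ω | Z ω = z} = 0)
    (ts : ℝ) (hts : 0 < ts)
    (h : ℝ → ℝ)
    (hdef : ∀ t, h t = (∫ ω, |Z ω| * (1 - rhoMaj m (ts * |Z ω|)) ∂μ) -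
      ∫ ω, |Z ω| / (1 + Real.exp (t * |Z ω|)) ∂μ) :
    h ts ≤ 0 ∧
    StrictMono h ∧
    (Tendsto h atTop (nhds (∫ ω, |Z ω| * (1 - rhoMaj m (ts * |Z ω|)) ∂μ)) ∧
      0 < ∫ ω, |Z ω| * (1 - rhoMaj m (ts * |Z ω|)) ∂μ) ∧
    ((∃! tm, h tm = 0) ∧ ∀ tm, h tm = 0 → ts ≤ tm) := by
  classical
  have hZset : MeasurableSet {ω | Z ω = 0} := hZm (measurableSet_singleton 0)
  have hZ1m : μ {ω | Z ω ≠ 0} = 1 := by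
    have he : {ω | Z ω ≠ 0} = {ω | Z ω = 0}ᶜ := rfl
    rw [he, measure_compl hZset (measure_ne_top μ _), hcont 0, measure_univ]
    simp
  set G : Ω → ℝ := fun ω => |Z ω| * (1 - rhoMaj m (ts * |Z ω|)) with hGdef
  set F : ℝ → Ω → ℝ := fun t ω => |Z ω| / (1 + Real.exp (t * |Z ω|)) with hFdef
  have habs : Integrable (fun ω => |Z ω|) μ := hZ1.abs
  -- continuity / measurability of F
  have hFzc : ∀ t : ℝ, Continuous (fun z : ℝ => |z| / (1 + Real.exp (t * z))) := by
    intro t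
    apply Continuous.div continuous_abs (by continuity)
    intro z; positivity
  have hFmeas : ∀ t : ℝ, AEStronglyMeasurable (F t) μ := by
    intro t
    have : F t = (fun z : ℝ => |z| / (1 + Real.exp (t * z))) ∘ (fun ω => |Z ω|) := by
      funext ω; simp [hFdef]
    rw [this]
    exact (((hFzc t).measurable).comp hZm.abs).aestronglyMeasurable
  have hFnonneg : ∀ t ω, 0 ≤ F t ω := by
    intro t ω; apply div_nonneg (abs_nonneg _); positivity
  have hFle : ∀ t ω, F t ω ≤ |Z ω| := by
    intro t ω
    apply div_le_self (abs_nonneg _)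
    linarith [Real.exp_pos (t * |Z ω|)]
  have hFbound : ∀ t ω, ‖F t ω‖ ≤ |Z ω| := by
    intro t ω
    rw [Real.norm_eq_abs, abs_of_nonneg (hFnonneg t ω)]
    exact hFle t ω
  have hFint : ∀ t, Integrable (F t) μ := by
    intro t
    apply Integrable.mono habs (hFmeas t)
    apply ae_of_all
    intro ω
    rw [Real.norm_eq_abs (|Z ω|), abs_abs]
    exact hFbound t ω
  -- G
  have hGmeas : AEStronglyMeasurable G μ := by
    have hc : Continuous (fun z : ℝ => |z| * (1 - rhoMaj m (ts * z))) := by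
      apply continuous_abs.mul
      exact continuous_const.sub ((rho_continuous m).comp (continuous_const.mul continuous_id))
    have : G = (fun z : ℝ => |z| * (1 - rhoMaj m (ts * z))) ∘ (fun ω => |Z ω|) := by
      funext ω; simp [hGdef]
    rw [this]
    exact ((hc.measurable).comp hZm.abs).aestronglyMeasurable
  have hGnonneg : ∀ ω, 0 ≤ G ω := by
    intro ω
    exact mul_nonneg (abs_nonneg _) (by linarith [rho_le_one m hm (ts * |Z ω|)])
  have hGle : ∀ ω, G ω ≤ |Z ω| := by
    intro ω
    have h1 : (1 - rhoMaj m (ts * |Z ω|)) ≤ 1 := by linarith [rho_nonneg m (ts * |Z ω|)]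
    calc G ω ≤ |Z ω| * 1 := mul_le_mul_of_nonneg_left h1 (abs_nonneg _)
      _ = |Z ω| := mul_one _
  have hGint : Integrable G μ := by
    apply Integrable.mono habs hGmeas
    apply ae_of_all
    intro ω
    rw [Real.norm_eq_abs (|Z ω|), abs_abs, Real.norm_eq_abs, abs_of_nonneg (hGnonneg ω)]
    exact hGle ω
  set A : ℝ := ∫ ω, G ω ∂μ with hAdef
  have hfun : h = fun t => A - ∫ ω, F t ω ∂μ := funext hdef
  -- (1) h ts ≤ 0
  have part1 : h ts ≤ 0 := by
    rw [hdef ts]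
    apply sub_nonpos.mpr
    apply integral_mono hGint (hFint ts)
    intro ω
    have hs : 0 ≤ ts * |Z ω| := mul_nonneg hts.le (abs_nonneg _)
    have hkey := rho_key m hm hs
    calc G ω ≤ |Z ω| * (1 / (1 + Real.exp (ts * |Z ω|))) :=
          mul_le_mul_of_nonneg_left hkey (abs_nonneg _)
      _ = F ts ω := by rw [mul_one_div]
  -- (2) strict mono
  have part2 : StrictMono h := by
    intro t1 t2 hlt
    rw [hdef t1, hdef t2]
    have hpt : ∀ ω, F t2 ω ≤ F t1 ω := by
      intro ω
      rcases eq_or_lt_of_le (abs_nonneg (Z ω)) with h0 | h0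
      · simp [hFdef, ← h0]
      · apply div_le_div_of_nonneg_left (abs_nonneg _) (by positivity)
        have : t1 * |Z ω| ≤ t2 * |Z ω| := by nlinarith
        have := Real.exp_le_exp.mpr this
        linarith
    have hsub : {ω | Z ω ≠ 0} ⊆ Function.support (fun ω => F t1 ω - F t2 ω) := by
      intro ω hω
      have hz : 0 < |Z ω| := abs_pos.mpr hω
      have hstrict : F t2 ω < F t1 ω := by
        have h1 : t1 * |Z ω| < t2 * |Z ω| := by nlinarith
        have h2 := Real.exp_lt_exp.mpr h1
        exact div_lt_div_of_pos_left hz (by positivity) (by linarith)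
      simp only [Function.mem_support]
      intro hc
      rw [sub_eq_zero] at hc
      exact absurd hc (ne_of_gt hstrict)
    have hpos : 0 < ∫ ω, (F t1 ω - F t2 ω) ∂μ := by
      rw [integral_pos_iff_support_of_nonneg_ae
        (ae_of_all _ (fun ω => sub_nonneg.mpr (hpt ω)))
        ((hFint t1).sub (hFint t2))]
      calc (0 : ENNReal) < 1 := by norm_num
        _ = μ {ω | Z ω ≠ 0} := hZ1m.symm
        _ ≤ μ (Function.support (fun ω => F t1 ω - F t2 ω)) := measure_mono hsub
    rw [integral_sub (hFint t1) (hFint t2)] at hpos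
    linarith
  -- (3) positivity of A
  have part3b : 0 < A := by
    rw [hAdef]
    rw [integral_pos_iff_support_of_nonneg_ae (ae_of_all _ hGnonneg) hGint]
    have hsub : {ω | Z ω ≠ 0} ⊆ Function.support G := by
      intro ω hω
      have hz : 0 < |Z ω| := abs_pos.mpr hω
      have hr : rhoMaj m (ts * |Z ω|) < 1 := rho_lt_one m hm _
      simp only [Function.mem_support, hGdef]
      exact ne_of_gt (mul_pos hz (by linarith))
    calc (0 : ENNReal) < 1 := by norm_num
      _ = μ {ω | Z ω ≠ 0} := hZ1m.symm
      _ ≤ μ (Function.support G) := measure_mono hsub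
  -- (3) limit
  have part3a : Tendsto h atTop (nhds A) := by
    have hB : Tendsto (fun t => ∫ ω, F t ω ∂μ) atTop (nhds (∫ _ω, (0:ℝ) ∂μ)) := by
      apply tendsto_integral_filter_of_dominated_convergence (fun ω => |Z ω|)
        (Eventually.of_forall hFmeas)
        (Eventually.of_forall (fun t => ae_of_all _ (hFbound t)))
        habs
      apply ae_of_all
      intro ω
      rcases eq_or_ne (Z ω) 0 with h0 | h0
      · have he : (fun t => F t ω) = fun _ => 0 := by
          funext t; simp [hFdef, h0]
        rw [he]
        exact tendsto_const_nhds
      · have hz : 0 < |Z ω| := abs_pos.mpr h0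
        have hd : Tendsto (fun t : ℝ => 1 + Real.exp (t * |Z ω|)) atTop atTop := by
          apply tendsto_atTop_add_const_left
          apply Real.tendsto_exp_atTop.comp
          exact Tendsto.atTop_mul_const hz tendsto_id
        simpa [hFdef] using Tendsto.div_atTop (tendsto_const_nhds (x := |Z ω|)) hd
    rw [hfun]
    rw [integral_zero] at hB
    simpa using tendsto_const_nhds.sub hB
  -- (4)
  have hcont2 : Continuous h := by
    have hBc : Continuous fun t => ∫ ω, F t ω ∂μ := by
      apply continuous_of_dominated hFmeas
        (fun t => ae_of_all _ (hFbound t)) habs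
      apply ae_of_all
      intro ω
      have : (fun t => F t ω) = fun t => |Z ω| / (1 + Real.exp (t * |Z ω|)) := rfl
      rw [this]
      apply Continuous.div continuous_const (by continuity)
      intro t; positivity
    rw [hfun]
    exact continuous_const.sub hBc
  have part4 : (∃! tm, h tm = 0) ∧ ∀ tm, h tm = 0 → ts ≤ tm := by
    constructor
    · obtain ⟨b, hb⟩ := ((part3a.eventually (eventually_gt_nhds part3b)).and
        (eventually_ge_atTop ts)).exists
      have hmem : (0:ℝ) ∈ Set.Icc (h ts) (h b) := ⟨part1, hb.1.le⟩
      obtain ⟨x, _, hx0⟩ := intermediate_value_Icc hb.2 hcont2.continuousOn hmem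
      exact ⟨x, hx0, fun y hy => part2.injective (hy.trans hx0.symm)⟩
    · intro tm htm
      by_contra hlt
      push_neg at hlt
      have := part2 hlt
      rw [htm] at this
      linarith
  exact ⟨part1, part2, ⟨part3a, part3b⟩, part4⟩
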